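/- Let d ≥ 1, C₁ > 0, and let u₀ : ℝ^d → ℝ be a bounded continuous function with u₀ ≥ 0 and u₀(y) ≥ C₁ for all ‖y‖ < 1. Then there exists a constant C > 0 such that for all t ≥ 1 and all x ∈ ℝ^d, ∫_{ℝ^d} K(t, x − y) u₀(y) dy ≥ C t^{−d/2} exp(−‖x‖²/(2t)). (This is the lower bound on I₁(x,t) in the proof of Theorem 2.3.) -/

import Mathlib

open MeasureTheory

/-- The heat kernel on `ℝ^d`: `K(t,x) = (4πt)^{-d/2} exp(-‖x‖²/(4t))`. -/
noncomputable def heatKernel (d : ℕ) (t : ℝ) (x : EuclideanSpace ℝ (Fin d)) : ℝ :=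
  (4 * Real.pi * t) ^ (-(d : ℝ) / 2) * Real.exp (-‖x‖ ^ 2 / (4 * t))

lemma integrable_gauss (d : ℕ) (b : ℝ) (hb : 0 < b) :
    Integrable (fun v : EuclideanSpace ℝ (Fin d) => Real.exp (-(b * ‖v‖ ^ 2))) := by
  have h := (GaussianFourier.integrable_cexp_neg_mul_sq_norm_add (V := EuclideanSpace ℝ (Fin d))
      (b := (b : ℂ)) (by simpa using hb) 0 (0 : EuclideanSpace ℝ (Fin d))).norm
  refine h.congr (Filter.Eventually.of_forall fun v => ?_)
  simp only [Complex.norm_exp]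
  norm_num
  left
  norm_cast

/-- If `u₀` is bounded continuous, nonnegative, with `u₀ ≥ C₁ > 0` on the unit ball, then
there is `C > 0` with `∫ K(t, x - y) u₀(y) dy ≥ C t^{-d/2} exp(-‖x‖²/(2t))`
for all `t ≥ 1` and all `x`. -/
theorem stmt_9 (d : ℕ) (hd : 1 ≤ d) (C₁ : ℝ) (hC₁ : 0 < C₁)
    (u₀ : EuclideanSpace ℝ (Fin d) → ℝ)
    (hcont : Continuous u₀) (hbdd : ∃ M, ∀ x, |u₀ x| ≤ M)
    (hnonneg : ∀ x, 0 ≤ u₀ x) (hlb : ∀ y, ‖y‖ < 1 → C₁ ≤ u₀ y) :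
    ∃ C > 0, ∀ t : ℝ, 1 ≤ t → ∀ x : EuclideanSpace ℝ (Fin d),
      C * t ^ (-(d : ℝ) / 2) * Real.exp (-‖x‖ ^ 2 / (2 * t))
        ≤ ∫ y, heatKernel d t (x - y) * u₀ y := by
  have hπ : (0:ℝ) < 4 * Real.pi := by positivity
  set c : ℝ := (4 * Real.pi) ^ (-(d : ℝ) / 2) with hc
  have hcpos : 0 < c := Real.rpow_pos_of_pos hπ _
  set V : ℝ := (volume (Metric.ball (0 : EuclideanSpace ℝ (Fin d)) 1)).toReal with hV
  have hVpos : 0 < V := by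
    rw [hV]
    exact ENNReal.toReal_pos (ne_of_gt (Metric.measure_ball_pos volume 0 one_pos))
      measure_ball_lt_top.ne
  refine ⟨C₁ * c * Real.exp (-(1/2)) * V, by positivity, ?_⟩
  intro t ht x
  have ht0 : (0:ℝ) < t := lt_of_lt_of_le one_pos ht
  set f : EuclideanSpace ℝ (Fin d) → ℝ := fun y => heatKernel d t (x - y) * u₀ y with hf
  have hfnonneg : ∀ y, 0 ≤ f y := by
    intro y
    have : 0 ≤ heatKernel d t (x - y) := by
      unfold heatKernel; positivity
    exact mul_nonneg this (hnonneg y)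
  -- integrability
  have hKint : Integrable (fun y => heatKernel d t (x - y)) := by
    have h1 : Integrable (fun v : EuclideanSpace ℝ (Fin d) =>
        Real.exp (-(1/(4*t) * ‖v‖ ^ 2))) := integrable_gauss d _ (by positivity)
    have h2 : Integrable ((fun v : EuclideanSpace ℝ (Fin d) =>
        Real.exp (-(1/(4*t) * ‖v‖ ^ 2))) ∘ (fun y => x - y)) :=
      ((Measure.measurePreserving_sub_left volume x).integrable_comp
        h1.aestronglyMeasurable).2 h1
    have h3 := h2.const_mul ((4 * Real.pi * t) ^ (-(d : ℝ) / 2))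
    refine h3.congr (Filter.Eventually.of_forall fun y => ?_)
    unfold heatKernel
    simp only [Function.comp]
    ring_nf
  have hfint : Integrable f := by
    have := hKint.bdd_mul (c := hbdd.choose) hcont.aestronglyMeasurable
      (Filter.Eventually.of_forall fun y => by simpa using hbdd.choose_spec y)
    exact this.congr (Filter.Eventually.of_forall fun y => mul_comm _ _)
  set k : ℝ := C₁ * (c * t ^ (-(d : ℝ) / 2) * (Real.exp (-‖x‖^2/(2*t)) * Real.exp (-(1/2))))
    with hk
  have hball : ∫ y in Metric.ball (0 : EuclideanSpace ℝ (Fin d)) 1, (fun _ => k) y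
      ≤ ∫ y in Metric.ball (0 : EuclideanSpace ℝ (Fin d)) 1, f y := by
    refine setIntegral_mono_on
      (integrableOn_const measure_ball_lt_top.ne)
      (hfint.integrableOn) measurableSet_ball ?_
    intro y hy
    rw [mem_ball_zero_iff] at hy
    have hxy : ‖x - y‖ ^ 2 ≤ 2 * ‖x‖ ^ 2 + 2 := by
      have h1 : ‖x - y‖ ≤ ‖x‖ + ‖y‖ := norm_sub_le _ _
      have h2 : ‖x - y‖ ^ 2 ≤ (‖x‖ + ‖y‖) ^ 2 := by
        have := norm_nonneg (x - y)
        nlinarith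
      nlinarith [norm_nonneg x, norm_nonneg y, hy.le, sq_nonneg (‖x‖ - ‖y‖),
        sq_nonneg (‖x‖ - 1)]
    have hexp : Real.exp (-‖x‖^2/(2*t)) * Real.exp (-(1/2))
        ≤ Real.exp (-‖x - y‖ ^ 2 / (4 * t)) := by
      rw [← Real.exp_add]
      apply Real.exp_le_exp.2
      have key : -‖x - y‖ ^ 2 / (4 * t) - (-‖x‖^2/(2*t) + -(1/2))
          = (2*‖x‖^2 + 2*t - ‖x - y‖^2) / (4*t) := by
        field_simp
        ring
      have hnum : 0 ≤ (2*‖x‖^2 + 2*t - ‖x - y‖^2) / (4*t) := by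
        apply div_nonneg _ (by positivity)
        nlinarith
      linarith [key ▸ hnum]
    have hK0 : 0 ≤ heatKernel d t (x - y) := by unfold heatKernel; positivity
    have hK : c * t ^ (-(d : ℝ) / 2) * (Real.exp (-‖x‖^2/(2*t)) * Real.exp (-(1/2)))
        ≤ heatKernel d t (x - y) := by
      unfold heatKernel
      rw [hc, ← Real.mul_rpow hπ.le ht0.le]
      exact mul_le_mul_of_nonneg_left hexp (by positivity)
    calc k ≤ C₁ * heatKernel d t (x - y) := mul_le_mul_of_nonneg_left hK hC₁.le
      _ = heatKernel d t (x - y) * C₁ := mul_comm _ _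
      _ ≤ heatKernel d t (x - y) * u₀ y := mul_le_mul_of_nonneg_left (hlb y hy) hK0
  have hsub : ∫ y in Metric.ball (0 : EuclideanSpace ℝ (Fin d)) 1, f y ≤ ∫ y, f y :=
    setIntegral_le_integral hfint (Filter.Eventually.of_forall hfnonneg)
  have hconst : ∫ y in Metric.ball (0 : EuclideanSpace ℝ (Fin d)) 1, (fun _ => k) y = V * k := by
    rw [setIntegral_const, smul_eq_mul, measureReal_def]
  calc C₁ * c * Real.exp (-(1/2)) * V * t ^ (-(d : ℝ) / 2) * Real.exp (-‖x‖ ^ 2 / (2 * t))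
      = V * k := by rw [hk]; ring
    _ ≤ _ := by rw [← hconst]; exact hball.trans hsub
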